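/- Let G be a finite group. If G is not cyclic, then m_{G,G} = 0; if G is cyclic of order n, then m_{G,G} = φ(n)/n, where φ is the Euler totient function. In particular, m_{G,G} = 0 if and only if G is not cyclic. -/
import Mathlib


open scoped Classical Pointwise

noncomputable instance (G : Type*) [Group G] [Finite G] : Fintype (Subgroup G) :=
  Fintype.ofFinite _

/-- The Möbius function of the subgroup lattice of a finite group `G`, defined as the
matrix inverse of the zeta matrix whose `(K, D)` entry is `1` if `K ≤ D` and `0` otherwise. -/
noncomputable def subgroupMu (G : Type*) [Group G] [Finite G] :
    Matrix (Subgroup G) (Subgroup G) ℚ :=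
  (Matrix.of fun K D : Subgroup G => if K ≤ D then (1 : ℚ) else 0)⁻¹

/-- `m_{G,N} = (1/|G|) · Σ_{X ≤ G, XN = G} |X| · μ(X, G)`. -/
noncomputable def mGN (G : Type*) [Group G] [Finite G] (N : Subgroup G) : ℚ :=
  (1 / (Nat.card G : ℚ)) *
    ∑ X : Subgroup G,
      if (X : Set G) * (N : Set G) = (Set.univ : Set G)
      then (Nat.card X : ℚ) * subgroupMu G X ⊤ else 0

/-- If `G` is not cyclic then `m_{G,G} = 0`; if `G` is cyclic of order `n` then
`m_{G,G} = φ(n)/n`. In particular `m_{G,G} = 0` iff `G` is not cyclic. -/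
theorem mGN_top (G : Type*) [Group G] [Finite G] :
    (¬ IsCyclic G → mGN G (⊤ : Subgroup G) = 0) ∧
    (IsCyclic G →
      mGN G (⊤ : Subgroup G) = (Nat.totient (Nat.card G) : ℚ) / (Nat.card G : ℚ)) ∧
    (mGN G (⊤ : Subgroup G) = 0 ↔ ¬ IsCyclic G) := by
  classical
  set Z : Matrix (Subgroup G) (Subgroup G) ℚ :=
    Matrix.of fun K D : Subgroup G => if K ≤ D then (1 : ℚ) else 0 with hZ
  have hBT : Z.BlockTriangular (fun X : Subgroup G => Nat.card X) := by
    intro K D h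
    simp only [hZ, Matrix.of_apply, ite_eq_right_iff]
    intro hKD
    exact absurd (Subgroup.card_le_of_le hKD) (not_le.mpr h)
  have hdet : Z.det = 1 := by
    rw [hBT.det]
    refine Finset.prod_eq_one fun k _ => ?_
    have hblock : Z.toSquareBlock (fun X : Subgroup G => Nat.card X) k = 1 := by
      ext K D
      simp only [Matrix.toSquareBlock_def, hZ, Matrix.of_apply, Matrix.one_apply]
      by_cases hKD : K = D
      · simp [hKD]
      · rw [if_neg hKD, if_neg]
        intro hle
        exact hKD (Subtype.ext (Subgroup.eq_of_le_of_card_ge hle (K.2.trans D.2.symm).ge))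
    rw [hblock, Matrix.det_one]
  have hmul : Z * Z⁻¹ = 1 := Matrix.mul_nonsing_inv Z (by rw [hdet]; exact isUnit_one)
  have hmu : subgroupMu G = Z⁻¹ := rfl
  have key : ∀ H : Subgroup G,
      (∑ X : Subgroup G, (if H ≤ X then (1 : ℚ) else 0) * subgroupMu G X ⊤) =
        if H = ⊤ then 1 else 0 := by
    intro H
    have := congrFun (congrFun hmul H) ⊤
    rw [Matrix.mul_apply, Matrix.one_apply] at this
    simpa [hmu, hZ] using this
  have := Fintype.ofFinite G
  -- the condition in mGN is always true for N = ⊤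
  have hcond : ∀ X : Subgroup G,
      (X : Set G) * ((⊤ : Subgroup G) : Set G) = (Set.univ : Set G) := by
    intro X
    rw [Subgroup.coe_top]
    exact Set.mul_univ ⟨1, X.one_mem⟩
  have hcard : ∀ X : Subgroup G,
      (Nat.card X : ℚ) = ∑ g : G, (if g ∈ X then (1 : ℚ) else 0) := by
    intro X
    rw [Finset.sum_boole, Nat.card_eq_fintype_card, Fintype.card_subtype]
  have hsum : mGN G (⊤ : Subgroup G) =
      (1 / (Nat.card G : ℚ)) *
        ((Finset.univ.filter fun g : G => Subgroup.zpowers g = ⊤).card : ℚ) := by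
    rw [mGN]
    congr 1
    calc
      (∑ X : Subgroup G,
          if (X : Set G) * ((⊤ : Subgroup G) : Set G) = (Set.univ : Set G)
          then (Nat.card X : ℚ) * subgroupMu G X ⊤ else 0)
          = ∑ X : Subgroup G, (Nat.card X : ℚ) * subgroupMu G X ⊤ := by
            refine Finset.sum_congr rfl fun X _ => if_pos (hcond X)
      _ = ∑ X : Subgroup G, ∑ g : G,
            (if Subgroup.zpowers g ≤ X then (1 : ℚ) else 0) * subgroupMu G X ⊤ := by
            refine Finset.sum_congr rfl fun X _ => ?_
            rw [hcard X, Finset.sum_mul]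
            refine Finset.sum_congr rfl fun g _ => ?_
            rw [Subgroup.zpowers_le]
      _ = ∑ g : G, ∑ X : Subgroup G,
            (if Subgroup.zpowers g ≤ X then (1 : ℚ) else 0) * subgroupMu G X ⊤ :=
            Finset.sum_comm
      _ = ∑ g : G, if Subgroup.zpowers g = ⊤ then (1 : ℚ) else 0 :=
            Finset.sum_congr rfl fun g _ => key (Subgroup.zpowers g)
      _ = ((Finset.univ.filter fun g : G => Subgroup.zpowers g = ⊤).card : ℚ) := by
            rw [Finset.sum_boole]
  have hnotcyc : ¬ IsCyclic G → mGN G (⊤ : Subgroup G) = 0 := by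
    intro hG
    rw [hsum]
    have : (Finset.univ.filter fun g : G => Subgroup.zpowers g = ⊤) = ∅ := by
      refine Finset.filter_false_of_mem fun g _ => fun h => ?_
      exact hG ⟨⟨g, fun x => (Subgroup.eq_top_iff' _).mp h x⟩⟩
    rw [this]
    simp
  have hcyc : IsCyclic G →
      mGN G (⊤ : Subgroup G) = (Nat.totient (Nat.card G) : ℚ) / (Nat.card G : ℚ) := by
    intro hG
    rw [hsum]
    have hfilter : (Finset.univ.filter fun g : G => Subgroup.zpowers g = ⊤) =
        (Finset.univ.filter fun g : G => orderOf g = Fintype.card G) := by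
      refine Finset.filter_congr fun g _ => ?_
      rw [← Subgroup.card_eq_iff_eq_top, Nat.card_zpowers, Nat.card_eq_fintype_card]
    rw [hfilter]
    have hcount : (Finset.univ.filter fun g : G => orderOf g = Fintype.card G).card =
        Nat.totient (Fintype.card G) := by
      have := hG.card_orderOf_eq_totient (dvd_refl (Fintype.card G))
      convert this using 2
    rw [hcount, Nat.card_eq_fintype_card, one_div_mul_eq_div]
  refine ⟨hnotcyc, hcyc, ?_⟩
  constructor
  · intro h0 hG
    have h1 := hcyc hG
    rw [h0, eq_comm, div_eq_zero_iff] at h1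
    have hn : (0 : ℕ) < Nat.card G := Nat.card_pos
    rcases h1 with h1 | h1
    · exact absurd (Nat.cast_eq_zero.mp h1) (Nat.totient_pos.mpr hn).ne'
    · exact absurd (Nat.cast_eq_zero.mp h1) hn.ne'
  · exact hnotcyc
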